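/- Let X be a strongly zero-dimensional metrizable space and Y, Z arbitrary topological spaces. Then every separately continuous mapping f : X × Y → Z (i.e., f(·, y) is continuous for each y ∈ Y and f(x, ·) is continuous for each x ∈ X) is a pointwise limit of a sequence of jointly continuous mappings fₙ : X × Y → Z; in particular, (X, Y, Z) is a Lebesgue triple. -/

import Mathlib

open Set Filter Topology

def crossOpen {X Y : Type*} [TopologicalSpace X] [TopologicalSpace Y] (A : Set (X × Y)) : Prop :=
  ∀ p ∈ A, ∃ U ∈ nhds p.1, ∃ V ∈ nhds p.2, ({p.1} ×ˢ V) ∪ (U ×ˢ {p.2}) ⊆ A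

def crossTopology (X Y : Type*) [TopologicalSpace X] [TopologicalSpace Y] :
    TopologicalSpace (X × Y) where
  IsOpen := crossOpen
  isOpen_univ := fun p _ => ⟨Set.univ, Filter.univ_mem, Set.univ, Filter.univ_mem, Set.subset_univ _⟩
  isOpen_inter := by
    rintro A B hA hB p hp
    obtain ⟨U1, hU1, V1, hV1, h1⟩ := hA p hp.1
    obtain ⟨U2, hU2, V2, hV2, h2⟩ := hB p hp.2
    refine ⟨U1 ∩ U2, Filter.inter_mem hU1 hU2, V1 ∩ V2, Filter.inter_mem hV1 hV2, ?_⟩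
    rintro q (hq | hq)
    · exact ⟨h1 (Or.inl ⟨hq.1, hq.2.1⟩), h2 (Or.inl ⟨hq.1, hq.2.2⟩)⟩
    · exact ⟨h1 (Or.inr ⟨hq.1.1, hq.2⟩), h2 (Or.inr ⟨hq.1.2, hq.2⟩)⟩
  isOpen_sUnion := by
    rintro S hS p hp
    obtain ⟨A, hAS, hpA⟩ := hp
    obtain ⟨U, hU, V, hV, h⟩ := hS A hAS p hpA
    exact ⟨U, hU, V, hV, h.trans (Set.subset_sUnion_of_mem hAS)⟩

def crossSet {X Y : Type*} (E : Set (X × Y)) : Set (X × Y) :=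
  {q | ∃ p ∈ E, q.1 = p.1 ∨ q.2 = p.2}


def FunctionallyOpen {X : Type*} [TopologicalSpace X] (U : Set X) : Prop :=
  ∃ g : X → ℝ, Continuous g ∧ U = g ⁻¹' ({0}ᶜ : Set ℝ)

def StronglyZeroDimensional (X : Type*) [TopologicalSpace X] : Prop :=
  CompletelyRegularSpace X ∧
    ∀ 𝒰 : Finset (Set X), (∀ U ∈ 𝒰, FunctionallyOpen U) → (⋃ U ∈ 𝒰, U) = Set.univ →
      ∃ 𝒱 : Finset (Set X), (∀ V ∈ 𝒱, IsOpen V) ∧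
        (𝒱 : Set (Set X)).PairwiseDisjoint id ∧
        (⋃ V ∈ 𝒱, V) = Set.univ ∧ ∀ V ∈ 𝒱, ∃ U ∈ 𝒰, V ⊆ U

theorem lebesgue_triple_of_stronglyZeroDimensional {X Y Z : Type*}
    [TopologicalSpace X] [TopologicalSpace.MetrizableSpace X] [Nonempty X]
    (hX : StronglyZeroDimensional X)
    [TopologicalSpace Y] [TopologicalSpace Z]
    (f : X × Y → Z)
    (hf1 : ∀ y : Y, Continuous fun x => f (x, y))
    (hf2 : ∀ x : X, Continuous fun y => f (x, y)) :
    ∃ F : ℕ → X × Y → Z, (∀ n, Continuous (F n)) ∧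
      ∀ p : X × Y, Filter.Tendsto (fun n => F n p) Filter.atTop (nhds (f p)) := by
  classical
  letI : MetricSpace X := TopologicalSpace.metrizableSpaceMetric X
  -- Step 1: clopen separation (Ind X = 0)
  have sep : ∀ A U : Set X, IsClosed A → IsOpen U → A ⊆ U →
      ∃ C : Set X, IsClopen C ∧ A ⊆ C ∧ C ⊆ U := by
    intro A U hA hU hAU
    by_cases hUuniv : U = univ
    · exact ⟨univ, isClopen_univ, subset_univ _, by rw [hUuniv]⟩
    by_cases hAemp : A = ∅
    · exact ⟨∅, isClopen_empty, by rw [hAemp], empty_subset _⟩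
    have fo : ∀ W : Set X, IsOpen W → Wᶜ.Nonempty → FunctionallyOpen W := by
      intro W hW hWc
      refine ⟨fun x => Metric.infDist x Wᶜ, Metric.continuous_infDist_pt _, ?_⟩
      ext x
      simp only [mem_preimage, mem_compl_iff, mem_singleton_iff]
      constructor
      · intro hx
        exact ne_of_gt ((hW.isClosed_compl.notMem_iff_infDist_pos hWc).1 (by simpa using hx))
      · intro hx
        by_contra hxW
        exact hx (Metric.infDist_zero_of_mem (by simpa using hxW))
    have hUf : FunctionallyOpen U := fo U hU (nonempty_compl.2 hUuniv)
    have hAf : FunctionallyOpen Aᶜ := by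
      refine fo Aᶜ hA.isOpen_compl ?_
      rw [compl_compl]
      exact nonempty_iff_ne_empty.2 hAemp
    obtain ⟨𝒱, hVo, hVd, hVu, hVr⟩ := hX.2 {U, Aᶜ}
      (by
        intro V hV
        rcases Finset.mem_insert.1 hV with rfl | hV
        · exact hUf
        · rw [Finset.mem_singleton] at hV; subst hV; exact hAf)
      (by
        apply eq_univ_of_forall
        intro x
        by_cases hx : x ∈ A
        · exact mem_iUnion₂.2 ⟨U, Finset.mem_insert_self _ _, hAU hx⟩
        · exact mem_iUnion₂.2 ⟨Aᶜ, Finset.mem_insert_of_mem (Finset.mem_singleton_self _), hx⟩)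
    set 𝒲 : Set (Set X) := {V | V ∈ 𝒱 ∧ (V ∩ A).Nonempty} with h𝒲
    refine ⟨⋃ V ∈ 𝒲, V, ⟨?_, ?_⟩, ?_, ?_⟩
    · -- closed
      have hcompl : (⋃ V ∈ 𝒲, V)ᶜ
          = ⋃ V ∈ {V | V ∈ 𝒱 ∧ ¬(V ∩ A).Nonempty}, V := by
        apply Subset.antisymm
        · intro x hx
          have hxu : x ∈ ⋃ V ∈ 𝒱, V := hVu ▸ mem_univ x
          rcases mem_iUnion₂.1 hxu with ⟨V, hV𝒱, hxV⟩
          by_cases hVA : (V ∩ A).Nonempty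
          · exact absurd (mem_iUnion₂.2 ⟨V, ⟨hV𝒱, hVA⟩, hxV⟩) hx
          · exact mem_iUnion₂.2 ⟨V, ⟨hV𝒱, hVA⟩, hxV⟩
        · intro x hx hx'
          rcases mem_iUnion₂.1 hx with ⟨V, hV, hxV⟩
          rcases mem_iUnion₂.1 hx' with ⟨V', hV', hxV'⟩
          have hne : V' ≠ V := by rintro rfl; exact hV.2 hV'.2
          exact Set.disjoint_left.1
            (hVd (Finset.mem_coe.2 hV'.1) (Finset.mem_coe.2 hV.1) hne) hxV' hxV
      rw [← isOpen_compl_iff, hcompl]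
      exact isOpen_biUnion fun V hV => hVo V hV.1
    · exact isOpen_biUnion fun V hV => hVo V hV.1
    · intro x hx
      have hxu : x ∈ ⋃ V ∈ 𝒱, V := hVu ▸ mem_univ x
      rcases mem_iUnion₂.1 hxu with ⟨V, hV𝒱, hxV⟩
      exact mem_iUnion₂.2 ⟨V, ⟨hV𝒱, ⟨x, hxV, hx⟩⟩, hxV⟩
    · refine iUnion₂_subset fun V hV => ?_
      obtain ⟨U', hU', hVU'⟩ := hVr V hV.1
      rcases Finset.mem_insert.1 hU' with rfl | hU'
      · exact hVU'
      · rw [Finset.mem_singleton] at hU'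
        subst hU'
        obtain ⟨x, hxV, hxA⟩ := hV.2
        exact absurd (hVU' hxV) (by simpa using hxA)
  -- Step 2: disjoint clopen partitions into small sets
  have part : ∀ ε : ℝ, 0 < ε → ∃ D : X → Set X,
      (∀ a, IsClopen (D a)) ∧ (∀ a b, a ≠ b → Disjoint (D a) (D b)) ∧
      (⋃ a, D a) = univ ∧ ∀ a, D a ⊆ Metric.ball a ε := by
    intro ε hε
    obtain ⟨v, vo, vU, vlf, vb⟩ := precise_refinement (fun a : X => Metric.ball a ε)
      (fun a => Metric.isOpen_ball)
      (eq_univ_of_forall fun x => mem_iUnion.2 ⟨x, Metric.mem_ball_self hε⟩)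
    obtain ⟨w, hwU, hwo, hwc⟩ := exists_subset_iUnion_closure_subset isClosed_univ vo
      (fun x _ => vlf.point_finite x) vU.ge
    choose C hC using fun a => sep (closure (w a)) (v a) isClosed_closure (vo a) (hwc a)
    have hClf : LocallyFinite C := vlf.subset fun a => (hC a).2.2
    letI : IsWellOrder X WellOrderingRel := WellOrderingRel.isWellOrder
    set D : X → Set X := fun a => C a \ ⋃ b : {b // WellOrderingRel b a}, C (b : X) with hD
    have hDclopen : ∀ a, IsClopen (D a) := by
      intro a
      have hcl : IsClosed (⋃ b : {b // WellOrderingRel b a}, C (b : X)) :=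
        (hClf.comp_injective Subtype.val_injective).isClosed_iUnion fun b => (hC _).1.1
      have hop : IsOpen (⋃ b : {b // WellOrderingRel b a}, C (b : X)) :=
        isOpen_iUnion fun b => (hC _).1.2
      exact ⟨(hC a).1.1.sdiff hop, (hC a).1.2.sdiff hcl⟩
    have hDdisj : ∀ a b, a ≠ b → Disjoint (D a) (D b) := by
      intro a b hab
      rcases trichotomous_of WellOrderingRel a b with h | h | h
      · refine Set.disjoint_left.2 fun x hxa hxb => ?_
        exact hxb.2 (mem_iUnion.2 ⟨⟨a, h⟩, hxa.1⟩)
      · exact absurd h hab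
      · refine Set.disjoint_left.2 fun x hxa hxb => ?_
        exact hxa.2 (mem_iUnion.2 ⟨⟨b, h⟩, hxb.1⟩)
    have hDcov : (⋃ a, D a) = univ := by
      apply eq_univ_of_forall
      intro x
      have hne : {a | x ∈ C a}.Nonempty := by
        rcases mem_iUnion.1 (hwU (mem_univ x)) with ⟨a, ha⟩
        exact ⟨a, (hC a).2.1 (subset_closure ha)⟩
      obtain ⟨a, ha, hmin⟩ := (IsWellFounded.wf (r := WellOrderingRel)).has_min _ hne
      refine mem_iUnion.2 ⟨a, ha, ?_⟩
      intro hx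
      rcases mem_iUnion.1 hx with ⟨⟨b, hb⟩, hxb⟩
      exact hmin b hxb hb
    exact ⟨D, hDclopen, hDdisj, hDcov,
      fun a => diff_subset.trans ((hC a).2.2.trans (vb a))⟩
  -- Step 3: locally constant approximations of the identity
  have key : ∀ n : ℕ, ∃ g : X → X, (∀ x, dist (g x) x < 1 / ((n : ℝ) + 1)) ∧
      ∀ x, ∃ C : Set X, IsClopen C ∧ x ∈ C ∧ ∀ x' ∈ C, g x' = g x := by
    intro n
    obtain ⟨D, hcl, hdisj, hcov, hsmall⟩ := part (1 / ((n : ℝ) + 1)) (by positivity)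
    have hmem : ∀ x : X, ∃ a, x ∈ D a := fun x => mem_iUnion.1 (hcov ▸ mem_univ x)
    choose g hg using hmem
    have huniq : ∀ x a, x ∈ D a → g x = a := by
      intro x a hxa
      by_contra h
      exact Set.disjoint_left.1 (hdisj _ _ h) (hg x) hxa
    refine ⟨g, ?_, ?_⟩
    · intro x
      have := hsmall (g x) (hg x)
      rw [Metric.mem_ball] at this
      simpa [dist_comm] using this
    · intro x
      refine ⟨D (g x), hcl _, hg x, fun x' hx' => ?_⟩
      rw [huniq x' (g x) hx']
  choose g hgdist hgC using key
  refine ⟨fun n p => f (g n p.1, p.2), ?_, ?_⟩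
  · intro n
    rw [continuous_iff_continuousAt]
    intro p
    obtain ⟨C, hCcl, hpC, hCg⟩ := hgC n p.1
    have hc : ContinuousAt (fun q : X × Y => f (g n p.1, q.2)) p :=
      ((hf2 (g n p.1)).comp continuous_snd).continuousAt
    apply hc.congr
    filter_upwards [prod_mem_nhds (hCcl.2.mem_nhds hpC) univ_mem] with q hq
    rw [hCg q.1 hq.1]
  · intro p
    have hg0 : Tendsto (fun n => g n p.1) atTop (𝓝 p.1) := by
      refine tendsto_iff_dist_tendsto_zero.2 ?_
      exact squeeze_zero (fun n => dist_nonneg) (fun n => (hgdist n p.1).le)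
        tendsto_one_div_add_atTop_nhds_zero_nat
    have := ((hf1 p.2).tendsto p.1).comp hg0
    exact this
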